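/- (Lemma 9.5, first-factor computation) Suppose 1 ≤ p ≤ b, and let a ∈ C_st(Q) with c = E(a). Then a_{1,r_p+1} ≥ a_{l_1+1,r_p+1} ≥ a_{l_2+1,r_p+1} ≥ ... ≥ a_{l_d+1,r_p+1} ≥ 0, where l_1 < ... < l_d are the left-oriented edges below the relevant threshold; this chain of inequalities follows from the nonnegativity of the coordinates of c together with the support-containment property: if the simple root α_{m} occurs in a root α of a given slice and m' appears 'later' along the slice, then α_{m'} also occurs in α. -/
import Mathlib


attribute [local instance] Classical.propDecidable

/-- Position of the `m`-th vertex (0-based) of the slice `S_z` determined by the quiver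
orientation `ε` (`ε m = true`: edge `m` right-oriented; `false`: left-oriented), as a
positive root `(i, j) ↔ α_i + ... + α_j` of `A_n`.  The slice starts at `(z, z)`. -/
def slicePos (ε : ℕ → Bool) (z : ℕ) : ℕ → ℤ × ℤ
  | 0 => ((z : ℤ), (z : ℤ))
  | m + 1 =>
    let p := slicePos ε z m
    if ε (m + 1) then (p.1, p.2 + 1) else (p.1 - 1, p.2)

/-- The `m`-th vertex of `S_z` is a genuine positive root, i.e. belongs to
`T_z = S_z ∩ A(Q_k)`. -/
def inRange (n : ℕ) (ε : ℕ → Bool) (z m : ℕ) : Prop :=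
  1 ≤ (slicePos ε z m).1 ∧ (slicePos ε z m).2 ≤ (n : ℤ)

/-- `Σ_{α ∈ T_z, s ∈ α} c_α`: the sum of `c_α` over the roots `α` of the slice `T_z`
whose support contains the simple root `α_s`. -/
noncomputable def ASum (n : ℕ) (ε : ℕ → Bool) (c : ℤ × ℤ → ℤ) (z : ℕ) (s : ℤ) : ℤ :=
  ∑ m ∈ Finset.range n,
    if inRange n ε z m ∧ (slicePos ε z m).1 ≤ s ∧ s ≤ (slicePos ε z m).2
    then c (slicePos ε z m) else 0

/-- `Σ_{α ∈ T_z, s ∈ α, s' ∉ α} c_α`. -/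
noncomputable def BSum (n : ℕ) (ε : ℕ → Bool) (c : ℤ × ℤ → ℤ) (z : ℕ) (s s' : ℤ) : ℤ :=
  ∑ m ∈ Finset.range n,
    if inRange n ε z m ∧ (slicePos ε z m).1 ≤ s ∧ s ≤ (slicePos ε z m).2 ∧
        ¬((slicePos ε z m).1 ≤ s' ∧ s' ≤ (slicePos ε z m).2)
    then c (slicePos ε z m) else 0

/-- (First-factor computation of Lemma 9.5.)  Let `e = r_p` be a right-oriented edge of
the quiver `Q`, `p` the number of right-oriented edges `≤ e` and `d` the number of
left-oriented edges `≤ e` (so `l_1 < ... < l_d` are the left edges below the threshold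
`e`).  For `a = D(c) ∈ C_st(Q)` with `c` nonnegative, the coordinates of `a` appearing in
the factor of `i(Q)` corresponding to the slice `T_{n+1-p}` satisfy the chain
`a_{1,r_p+1} ≥ a_{l_1+1,r_p+1} ≥ a_{l_2+1,r_p+1} ≥ ... ≥ a_{l_d+1,r_p+1} ≥ 0`,
where `a_{l_t+1,r_p+1} = Σ_{α ∈ T_{n+1-p}, (n-p+1-t) ∈ α} c_α` (so the chain is
`ASum` at the letters `n-p+1, n-p, ..., n-p+1-d`); it follows from the nonnegativity of
`c` together with the support-containment property of the roots in the slice. -/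

lemma slice_bounds (ε : ℕ → Bool) (z : ℕ) (m : ℕ) :
    (slicePos ε z m).1 ≤ (z : ℤ) ∧ (z : ℤ) ≤ (slicePos ε z m).2 := by
  induction m with
  | zero => simp [slicePos]
  | succ m ih =>
    simp only [slicePos]
    split <;> constructor <;> simp <;> omega

theorem first_factor_chain
    (n e p d : ℕ) (ε : ℕ → Bool) (c : ℤ × ℤ → ℤ)
    (hn : 1 ≤ n) (he1 : 1 ≤ e) (he2 : e ≤ n - 1) (her : ε e = true)
    (hp : p = ((Finset.Icc 1 e).filter (fun m => ε m = true)).card)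
    (hd : d = ((Finset.Icc 1 e).filter (fun m => ε m = false)).card)
    (hc : ∀ i j : ℤ, 1 ≤ i → i ≤ j → j ≤ (n : ℤ) → 0 ≤ c (i, j)) :
    ∀ t : ℕ, t ≤ d →
      0 ≤ ASum n ε c (n + 1 - p) ((n : ℤ) - (p : ℤ) + 1 - (t : ℤ)) ∧
      (t < d →
        ASum n ε c (n + 1 - p) ((n : ℤ) - (p : ℤ) - (t : ℤ)) ≤
          ASum n ε c (n + 1 - p) ((n : ℤ) - (p : ℤ) + 1 - (t : ℤ))) := by
  have hpn : p ≤ n := by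
    have h1 : ((Finset.Icc 1 e).filter (fun m => ε m = true)).card ≤ (Finset.Icc 1 e).card :=
      Finset.card_filter_le _ _
    rw [Nat.card_Icc] at h1
    omega
  intro t ht
  set z : ℕ := n + 1 - p with hzdef
  have hzc : ((z : ℕ) : ℤ) = (n : ℤ) + 1 - (p : ℤ) := by omega
  have nonneg : ∀ s : ℤ, ∀ m ∈ Finset.range n,
      0 ≤ (if inRange n ε z m ∧ (slicePos ε z m).1 ≤ s ∧ s ≤ (slicePos ε z m).2
        then c (slicePos ε z m) else 0) := by
    intro s m _
    split
    · next h =>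
      obtain ⟨⟨h1, h2⟩, _, _⟩ := h
      have hb := slice_bounds ε z m
      have := hc (slicePos ε z m).1 (slicePos ε z m).2 h1 (le_trans hb.1 hb.2) h2
      simpa using this
    · exact le_refl 0
  constructor
  · exact Finset.sum_nonneg (nonneg _)
  · intro htd
    apply Finset.sum_le_sum
    intro m hm
    by_cases h : inRange n ε z m ∧ (slicePos ε z m).1 ≤ (n : ℤ) - (p : ℤ) - (t : ℤ) ∧
        (n : ℤ) - (p : ℤ) - (t : ℤ) ≤ (slicePos ε z m).2
    · rw [if_pos h, if_pos]
      refine ⟨h.1, by linarith [h.2.1], ?_⟩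
      have hb := slice_bounds ε z m
      have : (n : ℤ) - (p : ℤ) + 1 - (t : ℤ) ≤ (z : ℤ) := by omega
      linarith [hb.2]
    · rw [if_neg h]
      exact nonneg _ m hm
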